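/- arXiv:1311.5631 — 2 statements merged into one kernel-verified Lean document; each statement's English description precedes it below -/
import Mathlib

section
/- The quantity ⟨D̃ψ̃/ds | Dψ/ds⟩ is gauge invariant: for binormalized curves ψ, ψ̃ and any differentiable ζ : ℝ → ℂ, the value of ⟨ψ̃' − Ã*ψ̃ | ψ' − Aψ⟩ computed for the gauge-transformed curves e^{iζ}ψ, e^{iζ*}ψ̃ equals its value for the original curves, where A = ⟨ψ̃|ψ'⟩ and the dual connection is Ã(s) with conj(Ã) appearing appropriately. -/
/-- Standard Hermitian inner product on ℂ^N, conjugate-linear in the first slot. -/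
noncomputable def inn {N : ℕ} (x y : Fin N → ℂ) : ℂ := ∑ i, (starRingEnd ℂ) (x i) * y i

lemma inn_smul_left {N : ℕ} (c : ℂ) (x y : Fin N → ℂ) :
    inn (c • x) y = (starRingEnd ℂ) c * inn x y := by
  simp [inn, Finset.mul_sum, mul_assoc]

lemma inn_smul_right {N : ℕ} (c : ℂ) (x y : Fin N → ℂ) :
    inn x (c • y) = c * inn x y := by
  simp [inn, Finset.mul_sum, mul_left_comm]

lemma inn_add_left {N : ℕ} (x y z : Fin N → ℂ) :
    inn (x + y) z = inn x z + inn y z := by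
  simp [inn, add_mul, Finset.sum_add_distrib]

lemma inn_add_right {N : ℕ} (x y z : Fin N → ℂ) :
    inn x (y + z) = inn x y + inn x z := by
  simp [inn, mul_add, Finset.sum_add_distrib]

lemma inn_sub_left {N : ℕ} (x y z : Fin N → ℂ) :
    inn (x - y) z = inn x z - inn y z := by
  simp [inn, sub_mul, Finset.sum_sub_distrib]

lemma inn_sub_right {N : ℕ} (x y z : Fin N → ℂ) :
    inn x (y - z) = inn x y - inn x z := by
  simp [inn, mul_sub, Finset.sum_sub_distrib]

/-- The quantity ⟨D̃ψ̃/ds | Dψ/ds⟩, with A(s) = ⟨ψ̃|ψ'⟩, Dψ/ds = ψ' − Aψ and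
D̃ψ̃/ds = ψ̃' − conj(A)ψ̃, is invariant under the gauge transformation ψ ↦ e^{iζ}ψ,
ψ̃ ↦ e^{iζ*}ψ̃ for binormalized curves. -/
theorem stmt7 {N : ℕ} (ψ ψt dψ dψt : ℝ → Fin N → ℂ) (ζ dζ : ℝ → ℂ)
    (hψ : ∀ s, HasDerivAt ψ (dψ s) s) (hψt : ∀ s, HasDerivAt ψt (dψt s) s)
    (hζ : ∀ s, HasDerivAt ζ (dζ s) s)
    (hbin : ∀ s, inn (ψt s) (ψ s) = 1) :
    ∀ s : ℝ,
      inn (deriv (fun u => Complex.exp (Complex.I * (starRingEnd ℂ) (ζ u)) • ψt u) s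
            - ((starRingEnd ℂ)
                (inn (Complex.exp (Complex.I * (starRingEnd ℂ) (ζ s)) • ψt s)
                  (deriv (fun u => Complex.exp (Complex.I * ζ u) • ψ u) s)))
              • (Complex.exp (Complex.I * (starRingEnd ℂ) (ζ s)) • ψt s))
          (deriv (fun u => Complex.exp (Complex.I * ζ u) • ψ u) s
            - (inn (Complex.exp (Complex.I * (starRingEnd ℂ) (ζ s)) • ψt s)
                (deriv (fun u => Complex.exp (Complex.I * ζ u) • ψ u) s))
              • (Complex.exp (Complex.I * ζ s) • ψ s))
      = inn (dψt s - ((starRingEnd ℂ) (inn (ψt s) (dψ s))) • ψt s)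
            (dψ s - (inn (ψt s) (dψ s)) • ψ s) := by
  intro s
  have hE : HasDerivAt (fun u => Complex.exp (Complex.I * ζ u))
      (Complex.exp (Complex.I * ζ s) * (Complex.I * dζ s)) s :=
    ((hζ s).const_mul Complex.I).cexp
  have hconj : HasDerivAt (fun u => (starRingEnd ℂ) (ζ u)) ((starRingEnd ℂ) (dζ s)) s :=
    (hζ s).star
  have hEt : HasDerivAt (fun u => Complex.exp (Complex.I * (starRingEnd ℂ) (ζ u)))
      (Complex.exp (Complex.I * (starRingEnd ℂ) (ζ s)) * (Complex.I * (starRingEnd ℂ) (dζ s))) s :=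
    (hconj.const_mul Complex.I).cexp
  have h1 : deriv (fun u => Complex.exp (Complex.I * ζ u) • ψ u) s
      = Complex.exp (Complex.I * ζ s) • dψ s
        + (Complex.exp (Complex.I * ζ s) * (Complex.I * dζ s)) • ψ s :=
    (hE.smul (hψ s)).deriv
  have h2 : deriv (fun u => Complex.exp (Complex.I * (starRingEnd ℂ) (ζ u)) • ψt u) s
      = Complex.exp (Complex.I * (starRingEnd ℂ) (ζ s)) • dψt s
        + (Complex.exp (Complex.I * (starRingEnd ℂ) (ζ s)) * (Complex.I * (starRingEnd ℂ) (dζ s))) • ψt s :=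
    (hEt.smul (hψt s)).deriv
  rw [h1, h2]
  have hE0 : Complex.exp (Complex.I * ζ s) ≠ 0 := Complex.exp_ne_zero _
  have hEt0 : Complex.exp (Complex.I * (starRingEnd ℂ) (ζ s)) ≠ 0 := Complex.exp_ne_zero _
  have hcE : (starRingEnd ℂ) (Complex.exp (Complex.I * ζ s))
      = (Complex.exp (Complex.I * (starRingEnd ℂ) (ζ s)))⁻¹ := by
    rw [← Complex.exp_conj]
    simp [← Complex.exp_neg]
  have hcEt : (starRingEnd ℂ) (Complex.exp (Complex.I * (starRingEnd ℂ) (ζ s)))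
      = (Complex.exp (Complex.I * ζ s))⁻¹ := by
    rw [← Complex.exp_conj]
    simp [← Complex.exp_neg]
  simp only [inn_sub_left, inn_sub_right, inn_add_left, inn_add_right,
    inn_smul_left, inn_smul_right, map_mul, map_add, map_sub, Complex.conj_I,
    RingHomCompTriple.comp_apply, RingHom.id_apply, Complex.conj_conj, map_neg]
  rw [hcEt]
  simp only [hbin s]
  field_simp
  ring
end

section
/- The geometric phase γ(0,t) = −(i/2)Log[⟨ψ̃(0)|ψ(t)⟩/⟨ψ̃(t)|ψ(0)⟩] + ∫₀ᵗ ⟨ψ̃|Hψ⟩dt' is invariant (mod π) under time-dependent gauge transformations ψ(t) ↦ e^{iζ(t)}ψ(t), ψ̃(t) ↦ e^{iζ(t)*}ψ̃(t) with ζ(0) = 0, when the Hamiltonian is transformed so that the Schrödinger equation still holds, i.e., the sum of the Pancharatnam term and minus the dynamical phase changes by an integer multiple of π. -/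
/-- Gauge invariance (mod π) of the geometric phase: under a gauge
transformation with ζ(0) = 0, the ratio r = ⟨ψ̃(0)|ψ(t)⟩/⟨ψ̃(t)|ψ(0)⟩ is multiplied by
e^{2iζ(t)} and the connection A shifts to A + iζ'; the combination
−(i/2)Log r + i∫₀ᵗ A changes by an integer multiple of π. -/
theorem stmt16 (A ζ dζ : ℝ → ℂ) (t : ℝ) (r : ℂ) (hr : r ≠ 0)
    (hζ : ∀ s, HasDerivAt ζ (dζ s) s) (hζ0 : ζ 0 = 0)
    (hA : IntervalIntegrable A MeasureTheory.volume 0 t)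
    (hdζ : IntervalIntegrable dζ MeasureTheory.volume 0 t) :
    ∃ k : ℤ,
      (-(Complex.I / 2) * Complex.log (Complex.exp (2 * Complex.I * ζ t) * r)
          + Complex.I * ∫ s in (0:ℝ)..t, (A s + Complex.I * dζ s))
        - (-(Complex.I / 2) * Complex.log r + Complex.I * ∫ s in (0:ℝ)..t, A s)
      = (k : ℂ) * (Real.pi : ℂ) := by
  -- value of ∫ dζ
  have hint : (∫ s in (0:ℝ)..t, dζ s) = ζ t := by
    rw [intervalIntegral.integral_eq_sub_of_hasDerivAt (fun s _ => hζ s) hdζ, hζ0, sub_zero]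
  have hsplit : (∫ s in (0:ℝ)..t, (A s + Complex.I * dζ s))
      = (∫ s in (0:ℝ)..t, A s) + Complex.I * ζ t := by
    rw [intervalIntegral.integral_add hA (hdζ.const_mul Complex.I),
      intervalIntegral.integral_const_mul, hint]
  -- log of exp * r
  have hexp : Complex.exp (Complex.log (Complex.exp (2 * Complex.I * ζ t) * r))
      = Complex.exp (2 * Complex.I * ζ t + Complex.log r) := by
    rw [Complex.exp_log (mul_ne_zero (Complex.exp_ne_zero _) hr), Complex.exp_add,
      Complex.exp_log hr]
  obtain ⟨n, hn⟩ := Complex.exp_eq_exp_iff_exists_int.mp hexp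
  refine ⟨n, ?_⟩
  rw [hsplit, hn]
  ring_nf
  rw [Complex.I_sq]
  ring
end
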